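/- Let G be a probability measure on ℝ and define S_G(t) = ∫ P{|N(u,1)| > t} G(du), the probability of exceeding threshold t under a Gaussian location mixture. Then for every t ≥ 0, S_G(t) ≤ 2Φ(-t) + ρ_G(1), where ρ_G(1) = ∫ min(u²,1) G(du). -/

import Mathlib

open MeasureTheory Set

noncomputable def stdPDF (x : ℝ) : ℝ := Real.exp (-x^2/2) / Real.sqrt (2*Real.pi)

noncomputable def stdCDF (t : ℝ) : ℝ := ∫ x in Set.Iic t, stdPDF x

/-- S_G(t) = ∫ P{|N(u,1)| > t} G(du) = ∫ [1 - Φ(t-u) + Φ(-t-u)] G(du). -/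
noncomputable def SG (G : Measure ℝ) (t : ℝ) : ℝ :=
  ∫ u, (1 - stdCDF (t - u) + stdCDF (-t - u)) ∂G

noncomputable def rho (G : Measure ℝ) (t : ℝ) : ℝ := ∫ u, min (u^2) (t^2) ∂G

lemma stdPDF_eq (x : ℝ) : stdPDF x = Real.exp (-(1/2) * x^2) / Real.sqrt (2*Real.pi) := by
  unfold stdPDF; congr 2; ring

lemma continuous_stdPDF : Continuous stdPDF := by
  unfold stdPDF
  fun_prop

lemma stdPDF_nonneg (x : ℝ) : 0 ≤ stdPDF x := by
  unfold stdPDF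
  positivity

lemma stdPDF_even (x : ℝ) : stdPDF (-x) = stdPDF x := by
  unfold stdPDF; rw [neg_pow]; ring_nf

lemma integrable_stdPDF : Integrable stdPDF := by
  have h := (integrable_exp_neg_mul_sq (by norm_num : (0:ℝ) < 1/2)).div_const
    (Real.sqrt (2*Real.pi))
  exact h.congr (by filter_upwards with x using (stdPDF_eq x).symm)

lemma sqrt_two_pi_pos : 0 < Real.sqrt (2*Real.pi) :=
  Real.sqrt_pos.2 (by positivity)

lemma integral_stdPDF : ∫ x, stdPDF x = 1 := by
  have h : ∫ x : ℝ, Real.exp (-(1/2) * x^2) = Real.sqrt (Real.pi / (1/2)) :=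
    integral_gaussian (1/2)
  simp only [stdPDF_eq]
  rw [integral_div, h]
  rw [show Real.pi / (1/2) = 2 * Real.pi by ring]
  exact div_self sqrt_two_pi_pos.ne'

lemma two_le_sqrt_two_pi : (2 : ℝ) ≤ Real.sqrt (2*Real.pi) := by
  have h1 : Real.sqrt 4 ≤ Real.sqrt (2*Real.pi) :=
    Real.sqrt_le_sqrt (by nlinarith [Real.pi_gt_three])
  have h2 : Real.sqrt 4 = 2 := by
    rw [show (4:ℝ) = 2^2 by norm_num, Real.sqrt_sq (by norm_num : (0:ℝ) ≤ 2)]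
  linarith

lemma hasDerivAt_stdPDF (x : ℝ) : HasDerivAt stdPDF (-x * stdPDF x) x := by
  have h1 : HasDerivAt (fun x : ℝ => -x^2/2) (-x) x := by
    have := ((hasDerivAt_pow 2 x).neg.div_const 2)
    refine this.congr_deriv ?_
    simp; ring
  have h2 := (Real.hasDerivAt_exp (-x^2/2)).comp x h1
  have h3 := h2.div_const (Real.sqrt (2*Real.pi))
  refine h3.congr_deriv ?_
  unfold stdPDF; ring

/-- The standard normal pdf is `1/2`-Lipschitz. -/
lemma stdPDF_lip (x y : ℝ) : |stdPDF x - stdPDF y| ≤ (1/2) * |x - y| := by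
  have hb : ∀ z : ℝ, ‖deriv stdPDF z‖₊ ≤ (1/2 : NNReal) := by
    intro z
    have hd := (hasDerivAt_stdPDF z).deriv
    rw [← NNReal.coe_le_coe, coe_nnnorm, hd, Real.norm_eq_abs]
    have h1 : |(-z) * stdPDF z| = |z| * Real.exp (-z^2/2) / Real.sqrt (2*Real.pi) := by
      rw [abs_mul, abs_neg, stdPDF, abs_div, abs_of_nonneg (Real.exp_pos _).le,
        abs_of_nonneg sqrt_two_pi_pos.le, mul_div_assoc]
    rw [h1]
    have h2 : |z| * Real.exp (-z^2/2) ≤ 1 := by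
      have hz : |z| ≤ Real.exp (z^2/2) := by
        calc |z| ≤ z^2/2 + 1 := by nlinarith [sq_abs z, sq_nonneg (|z| - 1)]
        _ ≤ Real.exp (z^2/2) := by linarith [Real.add_one_le_exp (z^2/2)]
      calc |z| * Real.exp (-z^2/2) ≤ Real.exp (z^2/2) * Real.exp (-z^2/2) := by
            apply mul_le_mul_of_nonneg_right hz (Real.exp_pos _).le
        _ = 1 := by rw [← Real.exp_add, show z^2/2 + -z^2/2 = 0 by ring, Real.exp_zero]
    have h3 : (2 : ℝ) ≤ Real.sqrt (2*Real.pi) := two_le_sqrt_two_pi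
    rw [div_le_iff₀ sqrt_two_pi_pos]
    push_cast
    nlinarith
  have hlip : LipschitzWith (1/2) stdPDF :=
    lipschitzWith_of_nnnorm_deriv_le (fun z => (hasDerivAt_stdPDF z).differentiableAt) hb
  have := hlip.dist_le_mul x y
  rwa [Real.dist_eq, Real.dist_eq, NNReal.coe_div, NNReal.coe_one, NNReal.coe_two] at this

lemma stdPDF_le_half (x : ℝ) : stdPDF x ≤ 1/2 := by
  unfold stdPDF
  have h3 : (2 : ℝ) ≤ Real.sqrt (2*Real.pi) := two_le_sqrt_two_pi
  have he : Real.exp (-x^2/2) ≤ 1 := by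
    rw [Real.exp_le_one_iff]
    nlinarith [sq_nonneg x]
  rw [div_le_iff₀ sqrt_two_pi_pos]
  nlinarith

lemma intervalIntegrable_stdPDF (a b : ℝ) : IntervalIntegrable stdPDF volume a b :=
  continuous_stdPDF.intervalIntegrable a b

lemma stdCDF_sub (a b : ℝ) : stdCDF b - stdCDF a = ∫ x in a..b, stdPDF x := by
  unfold stdCDF
  exact intervalIntegral.integral_Iic_sub_Iic integrable_stdPDF.integrableOn integrable_stdPDF.integrableOn

lemma stdCDF_neg (s : ℝ) : stdCDF (-s) = 1 - stdCDF s := by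
  have hsym : stdCDF (-s) = ∫ x in Ioi s, stdPDF x := by
    have h := integral_comp_neg_Iic (-s) stdPDF
    simp only [stdPDF_even, neg_neg] at h
    exact h
  have htot : stdCDF s + ∫ x in Ioi s, stdPDF x = 1 := by
    unfold stdCDF
    rw [← integral_stdPDF, ← integral_add_compl (measurableSet_Iic (a := s))
      integrable_stdPDF]
    congr 1
    simp
  linarith [hsym, htot]

lemma stdCDF_mono {a b : ℝ} (h : a ≤ b) : stdCDF a ≤ stdCDF b := by
  have := stdCDF_sub a b
  have hpos : 0 ≤ ∫ x in a..b, stdPDF x :=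
    intervalIntegral.integral_nonneg h (fun x _ => stdPDF_nonneg x)
  linarith

lemma stdCDF_nonneg (s : ℝ) : 0 ≤ stdCDF s :=
  setIntegral_nonneg measurableSet_Iic (fun x _ => stdPDF_nonneg x)

lemma stdCDF_le_one (s : ℝ) : stdCDF s ≤ 1 := by
  have := stdCDF_neg s
  have := stdCDF_nonneg (-s)
  linarith

lemma lipschitz_stdCDF (a b : ℝ) : |stdCDF b - stdCDF a| ≤ (1/2) * |b - a| := by
  rw [stdCDF_sub]
  have h := intervalIntegral.norm_integral_le_of_norm_le_const
    (C := 1/2) (f := stdPDF) (a := a) (b := b) (fun x _ => by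
      rw [Real.norm_eq_abs, abs_of_nonneg (stdPDF_nonneg x)]
      exact stdPDF_le_half x)
  rwa [Real.norm_eq_abs] at h

lemma continuous_stdCDF : Continuous stdCDF := by
  rw [Metric.continuous_iff]
  intro b ε hε
  refine ⟨ε, hε, fun a ha => ?_⟩
  rw [Real.dist_eq] at *
  calc |stdCDF a - stdCDF b| ≤ (1/2) * |a - b| := lipschitz_stdCDF b a
    _ < ε := by linarith [abs_nonneg (a - b)]

/-- Key pointwise inequality. -/
lemma pointwise_key (t u : ℝ) (ht : 0 ≤ t) :
    1 - stdCDF (t - u) + stdCDF (-t - u) ≤ 2 * stdCDF (-t) + min (u^2) 1 := by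
  have h1 : 1 - stdCDF (t - u) = stdCDF (u - t) := by
    rw [show u - t = -(t - u) by ring, stdCDF_neg]
  rw [h1]
  rcases le_or_gt (|u|) 1 with hu | hu
  · -- |u| ≤ 1 : Taylor-type bound
    have hmin : min (u^2) 1 = u^2 := min_eq_left (by nlinarith [sq_abs u, abs_nonneg u])
    rw [hmin]
    have e1 : stdCDF (u - t) - stdCDF (-t) = ∫ x in (-t)..(u - t), stdPDF x := stdCDF_sub _ _
    have e2 : stdCDF (-t) - stdCDF (-t - u) = ∫ x in (-t - u)..(-t), stdPDF x := stdCDF_sub _ _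
    have e3 : (∫ x in (-t - u)..(-t), stdPDF x) = ∫ x in (-t)..(u - t), stdPDF (x - u) := by
      rw [intervalIntegral.integral_comp_sub_right (fun x => stdPDF x) u]
      congr 1 <;> ring
    have e4 : (stdCDF (u - t) + stdCDF (-t - u)) - 2 * stdCDF (-t)
        = ∫ x in (-t)..(u - t), (stdPDF x - stdPDF (x - u)) := by
      rw [intervalIntegral.integral_sub (intervalIntegrable_stdPDF _ _)
        ((by exact continuous_stdPDF.comp (continuous_id.sub continuous_const) : Continuous fun x : ℝ => stdPDF (x - u)).intervalIntegrable _ _),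
        ← e1, ← e3, ← e2]
      ring
    have e5 : ‖∫ x in (-t)..(u - t), (stdPDF x - stdPDF (x - u))‖ ≤ (1/2 * |u|) * |u - t - (-t)| := by
      apply intervalIntegral.norm_integral_le_of_norm_le_const
      intro x _
      rw [Real.norm_eq_abs]
      calc |stdPDF x - stdPDF (x - u)| ≤ (1/2) * |x - (x - u)| := stdPDF_lip x (x - u)
        _ = 1/2 * |u| := by congr 1; congr 1; ring
    rw [Real.norm_eq_abs] at e5
    have e6 : |u - t - (-t)| = |u| := by congr 1; ring
    rw [e6] at e5
    have e7 : (stdCDF (u - t) + stdCDF (-t - u)) - 2 * stdCDF (-t) ≤ 1/2 * |u| * |u| :=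
      (le_abs_self _).trans (e4 ▸ e5)
    nlinarith [sq_abs u]
  · -- |u| ≥ 1
    have hmin : min (u^2) 1 = 1 := min_eq_right (by nlinarith [sq_abs u, abs_nonneg u])
    rw [hmin]
    have h2 : stdCDF (-t - u) = 1 - stdCDF (t + u) := by
      rw [show -t - u = -(t + u) by ring, stdCDF_neg]
    have h3 : stdCDF (u - t) ≤ stdCDF (u + t) := stdCDF_mono (by linarith)
    have h4 := stdCDF_nonneg (-t)
    rw [h2]
    have : stdCDF (t + u) = stdCDF (u + t) := by rw [add_comm]
    linarith

theorem stmt9 (G : Measure ℝ) [IsProbabilityMeasure G] (t : ℝ) (ht : 0 ≤ t) :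
    SG G t ≤ 2 * stdCDF (-t) + rho G 1 := by
  unfold SG rho
  have hcont : Continuous (fun u : ℝ => 1 - stdCDF (t - u) + stdCDF (-t - u)) := by
    apply Continuous.add
    · exact continuous_const.sub (continuous_stdCDF.comp (continuous_const.sub continuous_id))
    · exact continuous_stdCDF.comp (continuous_const.sub continuous_id)
  have hint1 : Integrable (fun u : ℝ => 1 - stdCDF (t - u) + stdCDF (-t - u)) G := by
    apply Integrable.mono' (integrable_const (2:ℝ)) hcont.aestronglyMeasurable
    filter_upwards with u
    rw [Real.norm_eq_abs, abs_le]
    constructor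
    · have := stdCDF_le_one (t - u); have := stdCDF_nonneg (-t - u); linarith
    · have := stdCDF_nonneg (t - u); have := stdCDF_le_one (-t - u); linarith
  have hint2 : Integrable (fun u : ℝ => min (u^2) ((1:ℝ)^2)) G := by
    apply Integrable.mono' (integrable_const (1:ℝ))
    · exact ((continuous_pow 2).min continuous_const).aestronglyMeasurable
    · filter_upwards with u
      have hnn : (0:ℝ) ≤ min (u^2) ((1:ℝ)^2) := le_min (sq_nonneg u) (by norm_num)
      rw [Real.norm_eq_abs, abs_of_nonneg hnn]
      exact (min_le_right (u^2) ((1:ℝ)^2)).trans (by norm_num)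
  have hint3 : Integrable (fun u : ℝ => 2 * stdCDF (-t) + min (u^2) ((1:ℝ)^2)) G :=
    (integrable_const _).add hint2
  calc ∫ u, (1 - stdCDF (t - u) + stdCDF (-t - u)) ∂G
      ≤ ∫ u, (2 * stdCDF (-t) + min (u^2) ((1:ℝ)^2)) ∂G := by
        apply integral_mono hint1 hint3
        intro u
        have h := pointwise_key t u ht
        rw [one_pow]
        exact h
    _ = 2 * stdCDF (-t) + ∫ u, min (u^2) ((1:ℝ)^2) ∂G := by
        rw [integral_add (integrable_const _) hint2, integral_const]
        simp
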